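/- (Chu's identity.) For every complex number q with |q| < 1 and all nonzero complex numbers b, c, d, α: [d/b, c/b, cd/α, α; q]_∞ − [c, d, α/b, cd/(bα); q]_∞ = c · [cd/b, 1/b, d/α, α/c; q]_∞. -/

import Mathlib

/-- The q-Pochhammer symbol of infinite order: `(x; q)_∞ = ∏_{k=0}^∞ (1 - x q^k)`. -/
noncomputable def qPoch (x q : ℂ) : ℂ := ∏' k : ℕ, (1 - x * q ^ k)

/-- The theta function `[x; q]_∞ = (x;q)_∞ (q/x;q)_∞`. -/
noncomputable def theta (x q : ℂ) : ℂ := qPoch x q * qPoch (q / x) q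

open Filter Topology

section basic
variable {q : ℂ} (hq : ‖q‖ < 1)

include hq in
lemma summable_aux (x : ℂ) : Summable fun k : ℕ => ‖x * q ^ k‖ := by
  simpa [norm_mul, norm_pow] using
    (summable_geometric_of_lt_one (norm_nonneg q) hq).mul_left ‖x‖

lemma hasProd_zero_of_factor {f : ℕ → ℂ} (k0 : ℕ) (h : f k0 = 0) : HasProd f 0 := by
  have : ∀ s : Finset ℕ, {k0} ≤ s → (∏ i ∈ s, f i) = 0 := fun s hs =>
    Finset.prod_eq_zero (hs (Finset.mem_singleton_self k0)) h
  exact tendsto_const_nhds.congr'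
    (eventually_atTop.2 ⟨{k0}, fun s hs => (this s hs).symm⟩)

include hq in
lemma summable_log (x : ℂ) (hx : ∀ k : ℕ, 1 - x * q ^ k ≠ 0) :
    Summable fun k : ℕ => Complex.log (1 - x * q ^ k) := by
  apply Summable.of_norm_bounded_eventually_nat
    ((summable_aux hq x).mul_left 2)
  have h0 : Tendsto (fun k : ℕ => ‖x * q ^ k‖) atTop (𝓝 0) := by
    simpa [norm_mul, norm_pow] using
      (tendsto_pow_atTop_nhds_zero_of_norm_lt_one hq).norm.const_mul ‖x‖
  filter_upwards [h0.eventually_le_const (by norm_num : (0:ℝ) < 1/2)] with k hk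
  have h1 : ‖-(x * q ^ k)‖ ≤ 1/2 := by simpa using hk
  calc ‖Complex.log (1 - x * q ^ k)‖ = ‖Complex.log (1 + -(x * q ^ k))‖ := by
        ring_nf
    _ ≤ 3/2 * ‖-(x * q ^ k)‖ := Complex.norm_log_one_add_half_le_self h1
    _ ≤ 2 * ‖x * q ^ k‖ := by simp only [norm_neg]; nlinarith [norm_nonneg (x * q ^ k)]

include hq in
lemma multipliable_qPoch (x : ℂ) : Multipliable fun k : ℕ => 1 - x * q ^ k := by
  by_cases hx : ∀ k : ℕ, 1 - x * q ^ k ≠ 0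
  · exact Complex.multipliable_of_summable_log (summable_log hq x hx)
  · push_neg at hx
    obtain ⟨k0, hk0⟩ := hx
    exact ⟨0, hasProd_zero_of_factor k0 hk0⟩

include hq in
lemma qPoch_eq_zero_iff (x : ℂ) : qPoch x q = 0 ↔ ∃ k : ℕ, x * q ^ k = 1 := by
  constructor
  · intro h
    by_contra hx
    push_neg at hx
    have hx' : ∀ k : ℕ, 1 - x * q ^ k ≠ 0 := fun k => sub_ne_zero.2 (fun e => hx k e.symm)
    have := Complex.cexp_tsum_eq_tprod (f := fun k => 1 - x * q ^ k) hx' (summable_log hq x hx')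
    rw [qPoch] at h
    exact Complex.exp_ne_zero _ (by rw [this, h])
  · rintro ⟨k, hk⟩
    exact (hasProd_zero_of_factor k (by rw [hk]; ring)).tprod_eq

include hq in
lemma qPoch_shift (x : ℂ) : qPoch x q = (1 - x) * qPoch (q * x) q := by
  have hm : Multipliable fun n : ℕ => 1 - x * q ^ (n + 1) := by
    have := multipliable_qPoch hq (q * x)
    apply this.congr
    intro k
    ring
  have h2 := tprod_eq_zero_mul' (f := fun k : ℕ => 1 - x * q ^ k) hm
  rw [qPoch, h2]
  simp only [pow_zero, mul_one, qPoch]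
  congr 1
  apply tprod_congr
  intro k
  ring

end basic
section thetalemmas
variable {q : ℂ} (hq : ‖q‖ < 1)

include hq in
lemma qPoch_ne_one_factor (x : ℂ) (h : ∀ k : ℕ, x * q ^ k ≠ 1) : qPoch x q ≠ 0 := by
  intro h0
  obtain ⟨k, hk⟩ := (qPoch_eq_zero_iff hq x).1 h0
  exact h k hk

include hq in
lemma qPoch_q_ne_zero : qPoch q q ≠ 0 := by
  apply qPoch_ne_one_factor hq
  intro k h
  have : ‖q * q ^ k‖ < 1 := by
    rw [norm_mul, norm_pow]
    calc ‖q‖ * ‖q‖ ^ k ≤ ‖q‖ * 1 := by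
          apply mul_le_mul_of_nonneg_left _ (norm_nonneg q)
          exact pow_le_one₀ (norm_nonneg q) hq.le
      _ < 1 := by simpa using hq
  rw [h] at this; simp at this

include hq in
lemma theta_one : theta 1 q = 0 := by
  have : qPoch 1 q = 0 := by
    rw [qPoch_eq_zero_iff hq]
    exact ⟨0, by simp⟩
  rw [theta, this, zero_mul]

include hq in
lemma theta_eq_zero_iff {x : ℂ} (hq0 : q ≠ 0) (hx : x ≠ 0) :
    theta x q = 0 ↔ ∃ n : ℤ, x = q ^ n := by
  rw [theta, mul_eq_zero, qPoch_eq_zero_iff hq, qPoch_eq_zero_iff hq]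
  constructor
  · rintro (⟨k, hk⟩ | ⟨k, hk⟩)
    · refine ⟨-(k : ℤ), ?_⟩
      rw [zpow_neg, zpow_natCast]
      field_simp
      linear_combination hk
    · refine ⟨(k : ℤ) + 1, ?_⟩
      have : q ^ (k + 1) = x := by
        field_simp at hk
        rw [pow_succ']; exact hk
      rw [← this]
      push_cast
      rw [zpow_add₀ hq0, zpow_natCast, zpow_one, pow_succ]
  · rintro ⟨n, rfl⟩
    rcases le_or_gt n 0 with hn | hn
    · left
      refine ⟨(-n).toNat, ?_⟩
      rw [← zpow_natCast q, Int.toNat_of_nonneg (by omega), ← zpow_add₀ hq0]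
      simp
    · right
      refine ⟨(n - 1).toNat, ?_⟩
      rw [← zpow_natCast q, Int.toNat_of_nonneg (by omega)]
      rw [div_mul_eq_mul_div, div_eq_one_iff_eq (by exact zpow_ne_zero n hq0)]
      nth_rewrite 1 [← zpow_one q]
      rw [← zpow_add₀ hq0]
      congr 1
      omega

include hq in
lemma theta_q_mul {x : ℂ} (hq0 : q ≠ 0) (hx : x ≠ 0) :
    x * theta (q * x) q = - theta x q := by
  have h1 : q / (q * x) = 1 / x := by field_simp
  have h2 : qPoch (1 / x) q = (1 - 1 / x) * qPoch (q / x) q := by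
    have := qPoch_shift hq (1 / x)
    rwa [show q * (1 / x) = q / x by ring] at this
  have h3 : qPoch x q = (1 - x) * qPoch (q * x) q := qPoch_shift hq x
  rw [theta, theta, h1, h2, h3]
  field_simp
  ring

include hq in
lemma theta_inv {x : ℂ} (hq0 : q ≠ 0) (hx : x ≠ 0) :
    x * theta x⁻¹ q = - theta x q := by
  have h1 : q / x⁻¹ = q * x := by field_simp
  have h2 : qPoch x⁻¹ q = (1 - x⁻¹) * qPoch (q / x) q := by
    have := qPoch_shift hq x⁻¹
    rwa [show q * x⁻¹ = q / x by ring] at this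
  have h3 : qPoch x q = (1 - x) * qPoch (q * x) q := qPoch_shift hq x
  rw [theta, theta, h1, h2, h3]
  field_simp
  ring

end thetalemmas
section entire
open Finset Metric
variable {q : ℂ} (hq : ‖q‖ < 1)

lemma norm_prod_one_add_le (f : ℕ → ℂ) (s : Finset ℕ) :
    ‖∏ i ∈ s, (1 + f i)‖ ≤ ∏ i ∈ s, (1 + ‖f i‖) :=
  calc ‖∏ i ∈ s, (1 + f i)‖ ≤ ∏ i ∈ s, ‖1 + f i‖ := norm_prod_le s _
  _ ≤ ∏ i ∈ s, (1 + ‖f i‖) := Finset.prod_le_prod (fun i _ => norm_nonneg _)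
      (fun i _ => (norm_add_le _ _).trans (by simp))

lemma norm_prod_one_add_sub_one_le (f : ℕ → ℂ) (s : Finset ℕ) :
    ‖∏ i ∈ s, (1 + f i) - 1‖ ≤ ∏ i ∈ s, (1 + ‖f i‖) - 1 := by
  induction s using Finset.induction with
  | empty => simp
  | @insert a t ha ih =>
    rw [Finset.prod_insert ha, Finset.prod_insert ha]
    have e1 : (1 + f a) * ∏ i ∈ t, (1 + f i) - 1
        = (∏ i ∈ t, (1 + f i) - 1) + f a * ∏ i ∈ t, (1 + f i) := by ring
    rw [e1]
    calc ‖(∏ i ∈ t, (1 + f i) - 1) + f a * ∏ i ∈ t, (1 + f i)‖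
        ≤ ‖∏ i ∈ t, (1 + f i) - 1‖ + ‖f a * ∏ i ∈ t, (1 + f i)‖ := norm_add_le _ _
      _ = ‖∏ i ∈ t, (1 + f i) - 1‖ + ‖f a‖ * ‖∏ i ∈ t, (1 + f i)‖ := by rw [norm_mul]
      _ ≤ (∏ i ∈ t, (1 + ‖f i‖) - 1) + ‖f a‖ * ∏ i ∈ t, (1 + ‖f i‖) :=
          add_le_add ih (mul_le_mul_of_nonneg_left (norm_prod_one_add_le f t) (norm_nonneg _))
      _ = (1 + ‖f a‖) * ∏ i ∈ t, (1 + ‖f i‖) - 1 := by ring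

lemma prod_one_add_le_exp (g : ℕ → ℝ) (hg : ∀ i, 0 ≤ g i) (s : Finset ℕ) :
    ∏ i ∈ s, (1 + g i) ≤ Real.exp (∑ i ∈ s, g i) := by
  rw [Real.exp_sum]
  exact Finset.prod_le_prod (fun i _ => by linarith [hg i])
    (fun i _ => by linarith [Real.add_one_le_exp (g i)])

include hq in
lemma sum_norm_pow_le (s : Finset ℕ) :
    ∑ i ∈ s, ‖q‖ ^ i ≤ (1 - ‖q‖)⁻¹ :=
  Summable.sum_le_tsum s (fun i _ => by positivity)
    (summable_geometric_of_lt_one (norm_nonneg q) hq) |>.trans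
    (le_of_eq (tsum_geometric_of_lt_one (norm_nonneg q) hq))

include hq in
lemma key_estimate {R : ℝ} (hR : 0 ≤ R) {x : ℂ} (hx : ‖x‖ ≤ R) {m n : ℕ} (h : m ≤ n) :
    ‖(∏ k ∈ range n, (1 - x * q ^ k)) - ∏ k ∈ range m, (1 - x * q ^ k)‖
      ≤ Real.exp (R * (1 - ‖q‖)⁻¹) * (Real.exp (R * (1 - ‖q‖)⁻¹ * ‖q‖ ^ m) - 1) := by
  have hb : ∀ k : ℕ, ‖-(x * q ^ k)‖ ≤ R * ‖q‖ ^ k := by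
    intro k
    rw [norm_neg, norm_mul, norm_pow]
    exact mul_le_mul_of_nonneg_right hx (by positivity)
  have hsplit : (∏ k ∈ range n, (1 - x * q ^ k))
      = (∏ k ∈ range m, (1 - x * q ^ k)) * ∏ k ∈ Ico m n, (1 - x * q ^ k) :=
    (Finset.prod_range_mul_prod_Ico _ h).symm
  have hsp2 : (∏ k ∈ range m, (1 - x * q ^ k)) * (∏ k ∈ Ico m n, (1 - x * q ^ k))
      - ∏ k ∈ range m, (1 - x * q ^ k)
      = (∏ k ∈ range m, (1 - x * q ^ k)) * ((∏ k ∈ Ico m n, (1 - x * q ^ k)) - 1) := by ring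
  rw [hsplit, hsp2, norm_mul]
  have hrw : ∀ s : Finset ℕ, (∏ k ∈ s, (1 - x * q ^ k)) = ∏ k ∈ s, (1 + -(x * q ^ k)) := by
    intro s; apply Finset.prod_congr rfl; intro k _; ring
  have h1 : ‖∏ k ∈ range m, (1 - x * q ^ k)‖ ≤ Real.exp (R * (1 - ‖q‖)⁻¹) := by
    rw [hrw]
    refine (norm_prod_one_add_le _ _).trans ?_
    refine (Finset.prod_le_prod (fun i _ => by positivity)
      (fun i _ => by linarith [hb i] : ∀ i ∈ range m, 1 + ‖-(x * q ^ i)‖ ≤ 1 + R * ‖q‖ ^ i)).trans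
      ?_
    refine (prod_one_add_le_exp _ (fun i => mul_nonneg hR (by positivity)) _).trans ?_
    apply Real.exp_le_exp.2
    rw [← Finset.mul_sum]
    exact mul_le_mul_of_nonneg_left (sum_norm_pow_le hq _) hR
  have h2 : ‖(∏ k ∈ Ico m n, (1 - x * q ^ k)) - 1‖
      ≤ Real.exp (R * (1 - ‖q‖)⁻¹ * ‖q‖ ^ m) - 1 := by
    rw [hrw]
    refine (norm_prod_one_add_sub_one_le _ _).trans ?_
    have step1 : ∏ k ∈ Ico m n, (1 + ‖-(x * q ^ k)‖) ≤ Real.exp (R * (1 - ‖q‖)⁻¹ * ‖q‖ ^ m) := by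
      refine (Finset.prod_le_prod (fun i _ => by positivity)
        (fun i _ => by linarith [hb i] :
          ∀ i ∈ Ico m n, 1 + ‖-(x * q ^ i)‖ ≤ 1 + R * ‖q‖ ^ i)).trans ?_
      refine (prod_one_add_le_exp _ (fun i => mul_nonneg hR (by positivity)) _).trans ?_
      apply Real.exp_le_exp.2
      have : ∑ i ∈ Ico m n, R * ‖q‖ ^ i = R * ‖q‖ ^ m * ∑ i ∈ range (n - m), ‖q‖ ^ i := by
        rw [Finset.sum_Ico_eq_sum_range, Finset.mul_sum]
        exact Finset.sum_congr rfl (fun i _ => by rw [pow_add]; ring)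
      rw [this, mul_comm (R * (1 - ‖q‖)⁻¹) (‖q‖ ^ m), mul_comm R ((1 - ‖q‖)⁻¹), ← mul_assoc]
      rw [mul_comm R (‖q‖ ^ m), mul_assoc, mul_assoc]
      apply mul_le_mul_of_nonneg_left _ (by positivity)
      rw [mul_comm]
      exact mul_le_mul_of_nonneg_right (sum_norm_pow_le hq _) hR
    linarith
  calc ‖∏ k ∈ range m, (1 - x * q ^ k)‖ * ‖(∏ k ∈ Ico m n, (1 - x * q ^ k)) - 1‖
      ≤ Real.exp (R * (1 - ‖q‖)⁻¹) * (Real.exp (R * (1 - ‖q‖)⁻¹ * ‖q‖ ^ m) - 1) := by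
        have hnn : (0:ℝ) ≤ Real.exp (R * (1 - ‖q‖)⁻¹ * ‖q‖ ^ m) - 1 := by
          have := Real.one_le_exp (show (0:ℝ) ≤ R * (1 - ‖q‖)⁻¹ * ‖q‖ ^ m by
            have h01 : (0:ℝ) < 1 - ‖q‖ := by linarith
            positivity)
          linarith
        exact mul_le_mul h1 h2 (norm_nonneg _) (Real.exp_pos _).le

end entire
section entire2
open Finset Metric Filter Topology
variable {q : ℂ} (hq : ‖q‖ < 1)

include hq in
lemma uniformCauchy_qPoch (R : ℝ) (hR : 0 ≤ R) :
    UniformCauchySeqOn (fun n x => ∏ k ∈ range n, (1 - x * q ^ k)) atTop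
      (Metric.closedBall 0 R) := by
  rw [Metric.uniformCauchySeqOn_iff]
  intro ε hε
  set C := R * (1 - ‖q‖)⁻¹ with hC
  have hC0 : 0 ≤ C := by
    have : (0:ℝ) < 1 - ‖q‖ := by linarith
    positivity
  have htend : Tendsto (fun N : ℕ => Real.exp C * (Real.exp (C * ‖q‖ ^ N) - 1)) atTop (𝓝 0) := by
    have h1 : Tendsto (fun N : ℕ => ‖q‖ ^ N) atTop (𝓝 0) :=
      tendsto_pow_atTop_nhds_zero_of_lt_one (norm_nonneg q) hq
    have h2 : Continuous fun t : ℝ => Real.exp C * (Real.exp (C * t) - 1) := by continuity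
    have := (h2.tendsto 0).comp h1
    simpa [Function.comp_def] using this
  obtain ⟨N, hN⟩ := (htend.eventually (gt_mem_nhds hε)).exists_forall_of_atTop
  refine ⟨N, fun m hm n hn x hx => ?_⟩
  rw [Metric.mem_closedBall, dist_zero_right] at hx
  rw [dist_eq_norm]
  have key : ∀ {a b : ℕ}, N ≤ a → a ≤ b →
      ‖(∏ k ∈ range a, (1 - x * q ^ k)) - ∏ k ∈ range b, (1 - x * q ^ k)‖ < ε := by
    intro a b ha hab
    rw [← norm_neg, neg_sub]
    refine lt_of_le_of_lt ((key_estimate hq hR hx hab).trans ?_) (hN N le_rfl)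
    have : ‖q‖ ^ a ≤ ‖q‖ ^ N := pow_le_pow_of_le_one (norm_nonneg q) hq.le ha
    have he : Real.exp (C * ‖q‖ ^ a) ≤ Real.exp (C * ‖q‖ ^ N) :=
      Real.exp_le_exp.2 (mul_le_mul_of_nonneg_left this hC0)
    have := Real.exp_pos C
    nlinarith
  rcases le_total m n with h | h
  · exact key hm h
  · rw [← norm_neg, neg_sub]; exact key hn h

include hq in
lemma tendstoUniformlyOn_qPoch (R : ℝ) (hR : 0 ≤ R) :
    TendstoUniformlyOn (fun n x => ∏ k ∈ range n, (1 - x * q ^ k)) (fun x => qPoch x q) atTop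
      (Metric.closedBall 0 R) :=
  (uniformCauchy_qPoch hq R hR).tendstoUniformlyOn_of_tendsto
    (fun x _ => (multipliable_qPoch hq x).hasProd.tendsto_prod_nat)

include hq in
lemma differentiable_qPoch : Differentiable ℂ fun x => qPoch x q := by
  intro z
  have hz : z ∈ Metric.ball (0:ℂ) (‖z‖ + 1) := by
    simp [Metric.mem_ball, dist_zero_right]
  have hsub : Metric.ball (0:ℂ) (‖z‖ + 1) ⊆ Metric.closedBall 0 (‖z‖ + 1) :=
    Metric.ball_subset_closedBall
  have hd : DifferentiableOn ℂ (fun x => qPoch x q) (Metric.ball 0 (‖z‖ + 1)) := by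
    apply TendstoLocallyUniformlyOn.differentiableOn
      (((tendstoUniformlyOn_qPoch hq (‖z‖ + 1) (by positivity)).mono
        hsub).tendstoLocallyUniformlyOn)
    · filter_upwards with n
      apply DifferentiableOn.mono _ (Set.subset_univ _)
      apply Differentiable.differentiableOn
      apply Differentiable.fun_finset_prod
      intro i _
      exact (differentiable_const (1:ℂ)).sub (differentiable_id.mul (differentiable_const _))
    · exact Metric.isOpen_ball
  exact (hd.differentiableAt (Metric.isOpen_ball.mem_nhds hz))

include hq in
lemma continuous_qPoch : Continuous fun x => qPoch x q :=
  (differentiable_qPoch hq).continuous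

end entire2
section functional
open Filter Topology
variable {q : ℂ} (hq : ‖q‖ < 1) (hq0 : q ≠ 0)

include hq hq0 in
lemma theta_div_q {x : ℂ} (hx : x ≠ 0) : theta (x / q) q = -(x / q) * theta x q := by
  have h := theta_q_mul hq hq0 (x := x / q) (div_ne_zero hx hq0)
  rw [show q * (x / q) = x by field_simp] at h
  linear_combination h

include hq hq0 in
lemma theta_q_mul_eq {x : ℂ} (hx : x ≠ 0) : theta (q * x) q = -theta x q / x := by
  rw [eq_div_iff hx]
  linear_combination theta_q_mul hq hq0 hx

/-- The function whose vanishing is Chu's identity. -/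
noncomputable def Fn (q b c d : ℂ) (α : ℂ) : ℂ :=
  theta (d/b) q * theta (c/b) q * theta (c*d/α) q * theta α q
  - theta c q * theta d q * theta (α/b) q * theta (c*d/(b*α)) q
  - c * (theta (c*d/b) q * theta (1/b) q * theta (d/α) q * theta (α/c) q)

/-- Denominator function with the same quasi-periodicity. -/
noncomputable def Dn (q c d : ℂ) (α : ℂ) : ℂ := theta (α/c) q * theta (q*α/d) q

variable {b c d : ℂ} (hb : b ≠ 0) (hc : c ≠ 0) (hd : d ≠ 0)

include hq hq0 hb hc hd in
lemma F_qmul {α : ℂ} (hα : α ≠ 0) :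
    b * (q * α^2) * Fn q b c d (q * α) = b * (c * d) * Fn q b c d α := by
  have e1 : q*α * theta ((c*d/α)/q) q = -(c*d) * theta (c*d/α) q := by
    rw [theta_div_q hq hq0 (div_ne_zero (mul_ne_zero hc hd) hα)]; field_simp
  have e2 : α * theta (q*α) q = -theta α q := theta_q_mul hq hq0 hα
  have e3 : α * theta (q*(α/b)) q = -b * theta (α/b) q := by
    have h := theta_q_mul hq hq0 (div_ne_zero hα hb)
    field_simp at h ⊢
    linear_combination h
  have e4 : q*(b*α) * theta ((c*d/(b*α))/q) q = -(c*d) * theta (c*d/(b*α)) q := by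
    rw [theta_div_q hq hq0 (div_ne_zero (mul_ne_zero hc hd) (mul_ne_zero hb hα))]; field_simp
  have e5 : q*α * theta ((d/α)/q) q = -d * theta (d/α) q := by
    rw [theta_div_q hq hq0 (div_ne_zero hd hα)]; field_simp
  have e6 : α * theta (q*(α/c)) q = -c * theta (α/c) q := by
    have h := theta_q_mul hq hq0 (div_ne_zero hα hc)
    field_simp at h ⊢
    linear_combination h
  rw [Fn, Fn, show c*d/(q*α) = (c*d/α)/q by ring, show q*α/b = q*(α/b) by ring,
    show c*d/(b*(q*α)) = (c*d/(b*α))/q by ring, show d/(q*α) = (d/α)/q by ring,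
    show q*α/c = q*(α/c) by ring]
  linear_combination (b*theta (d/b) q*theta (c/b) q) *
      ((α*theta (q*α) q)*e1 + (-(c*d)*theta (c*d/α) q)*e2)
    - (theta c q*theta d q) *
      ((q*(b*α)*theta ((c*d/(b*α))/q) q)*e3 + (-b*theta (α/b) q)*e4)
    - (b*c*theta (c*d/b) q*theta (1/b) q) *
      ((α*theta (q*(α/c)) q)*e5 + (-d*theta (d/α) q)*e6)

include hq hq0 hc hd in
lemma D_qmul {α : ℂ} (hα : α ≠ 0) :
    (q * α^2) * Dn q c d (q * α) = (c * d) * Dn q c d α := by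
  have e6 : α * theta (q*(α/c)) q = -c * theta (α/c) q := by
    have h := theta_q_mul hq hq0 (div_ne_zero hα hc)
    field_simp at h ⊢
    linear_combination h
  have f2 : q*α * theta (q*(q*α/d)) q = -d * theta (q*α/d) q := by
    have h := theta_q_mul hq hq0 (div_ne_zero (mul_ne_zero hq0 hα) hd)
    field_simp at h ⊢
    linear_combination h
  rw [Dn, Dn, show q*α/c = q*(α/c) by ring, show q*(q*α)/d = q*(q*α/d) by ring]
  linear_combination (q*α*theta (q*(q*α/d)) q)*e6 + (-c*theta (α/c) q)*f2

include hq hc in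
lemma F_at_c : Fn q b c d c = 0 := by
  by_cases hb : b = 0
  · rw [Fn, show c*d/c = d by rw [div_eq_iff hc]; ring,
      show c*d/(b*c) = d/b by rw [hb]; simp, div_self hc, theta_one hq, hb]
    simp only [div_zero, mul_zero, zero_mul]
    ring
  · rw [Fn, show c*d/c = d by rw [div_eq_iff hc]; ring,
      show c*d/(b*c) = d/b by rw [div_eq_div_iff (mul_ne_zero hb hc) hb]; ring,
      div_self hc, theta_one hq]
    ring

include hq hd in
lemma F_at_d : Fn q b c d d = 0 := by
  by_cases hb : b = 0
  · rw [Fn, show c*d/d = c by rw [div_eq_iff hd],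
      show c*d/(b*d) = c/b by rw [hb]; simp, div_self hd, theta_one hq, hb]
    simp only [div_zero, mul_zero, zero_mul]
    ring
  · rw [Fn, show c*d/d = c by rw [div_eq_iff hd],
      show c*d/(b*d) = c/b by rw [div_eq_div_iff (mul_ne_zero hb hd) hb]; ring,
      div_self hd, theta_one hq]
    ring

include hq hq0 hc in
lemma F_at_one : Fn q b c d 1 = 0 := by
  have hinv := theta_inv hq hq0 hc
  rw [Fn, theta_one hq, show (1:ℂ)/c = c⁻¹ by rw [one_div]]
  simp only [div_one, mul_one]
  linear_combination (-(theta (c*d/b) q * theta (1/b) q * theta d q)) * hinv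

end functional
section shift
open Filter Topology
variable {q : ℂ} (hq : ‖q‖ < 1) (hq0 : q ≠ 0)

lemma isOpen_ne_zero : IsOpen {x : ℂ | x ≠ 0} := isOpen_compl_singleton

include hq in
lemma diffOn_theta : DifferentiableOn ℂ (fun x => theta x q) {x : ℂ | x ≠ 0} := by
  have h1 : DifferentiableOn ℂ (fun x : ℂ => qPoch x q) {x : ℂ | x ≠ 0} :=
    (differentiable_qPoch hq).differentiableOn
  have h2 : DifferentiableOn ℂ (fun x : ℂ => qPoch (q / x) q) {x : ℂ | x ≠ 0} :=
    (differentiable_qPoch hq).comp_differentiableOn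
      ((differentiableOn_const q).div differentiableOn_id (fun x hx => hx))
  exact h1.mul h2

include hq hq0 in
lemma theta_zpow_shift (n : ℤ) : ∃ φ : ℂ → ℂ,
    DifferentiableOn ℂ φ {x : ℂ | x ≠ 0} ∧ (∀ x : ℂ, x ≠ 0 → φ x ≠ 0) ∧
    ∀ x : ℂ, x ≠ 0 → theta (q ^ n * x) q = φ x * theta x q := by
  induction n using Int.induction_on with
  | zero => exact ⟨fun _ => 1, differentiableOn_const 1, fun _ _ => one_ne_zero,
      fun x _ => by simp⟩
  | succ n ih =>
    obtain ⟨φ, hφd, hφ0, hφ⟩ := ih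
    refine ⟨fun x => φ (q * x) * (-x⁻¹), ?_, ?_, ?_⟩
    · apply DifferentiableOn.mul
      · apply DifferentiableOn.comp hφd
        · exact (differentiableOn_const q).mul differentiableOn_id
        · intro x hx; exact mul_ne_zero hq0 hx
      · exact (differentiableOn_inv.mono (fun x hx => hx)).neg
    · intro x hx
      exact mul_ne_zero (hφ0 _ (mul_ne_zero hq0 hx)) (by simp [hx])
    · intro x hx
      have h1 : q ^ ((n : ℤ) + 1) * x = q ^ (n : ℤ) * (q * x) := by
        rw [zpow_add₀ hq0, zpow_one]; ring
      simp only
      rw [h1, hφ _ (mul_ne_zero hq0 hx), theta_q_mul_eq hq hq0 hx]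
      field_simp
  | pred n ih =>
    obtain ⟨φ, hφd, hφ0, hφ⟩ := ih
    refine ⟨fun x => φ (x / q) * (-(x / q)), ?_, ?_, ?_⟩
    · apply DifferentiableOn.mul
      · apply DifferentiableOn.comp hφd
        · exact differentiableOn_id.div_const q
        · intro x hx; exact div_ne_zero hx hq0
      · exact (differentiableOn_id.div_const q).neg
    · intro x hx
      exact mul_ne_zero (hφ0 _ (div_ne_zero hx hq0)) (by simp [hx, hq0])
    · intro x hx
      have h1 : q ^ (-(n : ℤ) - 1) * x = q ^ (-(n : ℤ)) * (x / q) := by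
        rw [zpow_sub₀ hq0, zpow_neg, zpow_one]; field_simp
      simp only
      rw [h1, hφ _ (div_ne_zero hx hq0), theta_div_q hq hq0 hx]
      ring

include hq hq0 in
lemma theta_factor (n : ℤ) : ∃ g : ℂ → ℂ,
    DifferentiableOn ℂ g {x : ℂ | x ≠ 0} ∧ g (q ^ n) ≠ 0 ∧
    ∀ x : ℂ, x ≠ 0 → theta x q = (1 - x / q ^ n) * g x := by
  obtain ⟨φ, hφd, hφ0, hφ⟩ := theta_zpow_shift hq hq0 n
  have hqn : (q : ℂ) ^ n ≠ 0 := zpow_ne_zero n hq0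
  refine ⟨fun x => φ (x / q ^ n) * (qPoch (q * (x / q ^ n)) q * qPoch (q / (x / q ^ n)) q),
    ?_, ?_, ?_⟩
  · apply DifferentiableOn.mul
    · apply DifferentiableOn.comp hφd
      · exact differentiableOn_id.div_const _
      · intro x hx; exact div_ne_zero hx hqn
    · apply DifferentiableOn.mul
      · exact (differentiable_qPoch hq).comp_differentiableOn
          ((differentiableOn_id.div_const _).const_mul q)
      · exact (differentiable_qPoch hq).comp_differentiableOn
          ((differentiableOn_const q).div (differentiableOn_id.div_const _)
            (fun x hx => div_ne_zero hx hqn))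
  · have e1 : (q : ℂ) ^ n / q ^ n = 1 := div_self hqn
    simp only [e1, mul_one, div_one]
    exact mul_ne_zero (hφ0 1 one_ne_zero)
      (mul_ne_zero (qPoch_q_ne_zero hq) (qPoch_q_ne_zero hq))
  · intro x hx
    have hu : x / q ^ n ≠ 0 := div_ne_zero hx hqn
    have hx' : x = q ^ n * (x / q ^ n) := by field_simp
    calc theta x q = theta (q ^ n * (x / q ^ n)) q := by rw [← hx']
      _ = φ (x / q ^ n) * theta (x / q ^ n) q := hφ _ hu
      _ = φ (x / q ^ n) * (qPoch (x / q ^ n) q * qPoch (q / (x / q ^ n)) q) := by rw [theta]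
      _ = φ (x / q ^ n) * ((1 - x / q ^ n) * qPoch (q * (x / q ^ n)) q
            * qPoch (q / (x / q ^ n)) q) := by rw [← qPoch_shift hq]
      _ = (1 - x / q ^ n) * (φ (x / q ^ n) * (qPoch (q * (x / q ^ n)) q
            * qPoch (q / (x / q ^ n)) q)) := by ring

include hq hq0 in
lemma theta_ne_zero {x : ℂ} (hx : x ≠ 0) (h : ∀ n : ℤ, x ≠ q ^ n) : theta x q ≠ 0 := by
  rw [Ne, theta_eq_zero_iff hq hq0 hx]
  push_neg
  exact h

end shift
section zeros
open Filter Topology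
variable {q b c d : ℂ} (hq : ‖q‖ < 1) (hq0 : q ≠ 0) (hb : b ≠ 0) (hc : c ≠ 0) (hd : d ≠ 0)

include hq hq0 hb hc hd in
lemma F_zero_iff {α : ℂ} (hα : α ≠ 0) :
    Fn q b c d (q * α) = 0 ↔ Fn q b c d α = 0 := by
  have h := F_qmul hq hq0 hb hc hd hα
  have h1 : b * (q * α ^ 2) ≠ 0 := mul_ne_zero hb (mul_ne_zero hq0 (pow_ne_zero 2 hα))
  have h2 : b * (c * d) ≠ 0 := mul_ne_zero hb (mul_ne_zero hc hd)
  constructor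
  · intro h0
    rw [h0, mul_zero] at h
    rcases mul_eq_zero.1 h.symm with h3 | h3
    · exact absurd h3 h2
    · exact h3
  · intro h0
    rw [h0, mul_zero] at h
    rcases mul_eq_zero.1 h with h3 | h3
    · exact absurd h3 h1
    · exact h3

include hq hq0 hb hc hd in
lemma F_lattice {x : ℂ} (hx : x ≠ 0) (h : Fn q b c d x = 0) (n : ℤ) :
    Fn q b c d (q ^ n * x) = 0 := by
  induction n using Int.induction_on with
  | zero => simpa using h
  | succ n ih =>
    have hqx : q ^ (n : ℤ) * x ≠ 0 := mul_ne_zero (zpow_ne_zero _ hq0) hx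
    have e : q ^ ((n : ℤ) + 1) * x = q * (q ^ (n : ℤ) * x) := by
      rw [zpow_add₀ hq0, zpow_one]; ring
    rw [e, F_zero_iff hq hq0 hb hc hd hqx]
    exact ih
  | pred n ih =>
    have hqx : q ^ (-(n : ℤ) - 1) * x ≠ 0 := mul_ne_zero (zpow_ne_zero _ hq0) hx
    have e : q ^ (-(n : ℤ)) * x = q * (q ^ (-(n : ℤ) - 1) * x) := by
      rw [zpow_sub₀ hq0, zpow_one]; field_simp
    rw [e] at ih
    exact (F_zero_iff hq hq0 hb hc hd hqx).1 ih

include hq hq0 hc hd in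
lemma D_zero_cases {α : ℂ} (hα : α ≠ 0) (h : Dn q c d α = 0) :
    (∃ n : ℤ, α = c * q ^ n) ∨ (∃ n : ℤ, α = d * q ^ n) := by
  rcases mul_eq_zero.1 h with h1 | h1
  · left
    obtain ⟨n, hn⟩ := (theta_eq_zero_iff hq hq0 (div_ne_zero hα hc)).1 h1
    exact ⟨n, by field_simp at hn; linear_combination hn⟩
  · right
    obtain ⟨n, hn⟩ :=
      (theta_eq_zero_iff hq hq0 (div_ne_zero (mul_ne_zero hq0 hα) hd)).1 h1
    refine ⟨n - 1, ?_⟩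
    have hp : q ^ n = q ^ (n - 1) * q := by rw [← zpow_add_one₀ hq0]; congr 1; ring
    rw [hp] at hn
    field_simp at hn
    apply mul_left_cancel₀ hq0
    linear_combination q * hn

include hq hq0 hb hc hd in
lemma F_on_D_zeros {α : ℂ} (hα : α ≠ 0) (h : Dn q c d α = 0) : Fn q b c d α = 0 := by
  rcases D_zero_cases hq hq0 hc hd hα h with ⟨n, rfl⟩ | ⟨n, rfl⟩
  · rw [mul_comm]
    exact F_lattice hq hq0 hb hc hd hc (F_at_c hq hc) n
  · rw [mul_comm]
    exact F_lattice hq hq0 hb hc hd hd (F_at_d hq hd) n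

variable (hgc : ∀ n : ℤ, c ≠ q ^ n) (hgd : ∀ n : ℤ, d ≠ q ^ n) (hgcd : ∀ n : ℤ, c ≠ d * q ^ n)

include hq hq0 hc hd hgc hgd in
lemma D_at_one_ne : Dn q c d 1 ≠ 0 := by
  apply mul_ne_zero
  · apply theta_ne_zero hq hq0 (by simpa using inv_ne_zero hc)
    intro m hm
    apply hgc (-m)
    rw [zpow_neg, ← hm]
    field_simp
  · apply theta_ne_zero hq hq0 (div_ne_zero (by simpa using hq0) hd)
    intro m hm
    apply hgd (1 - m)
    rw [zpow_sub₀ hq0, zpow_one, eq_div_iff (zpow_ne_zero _ hq0)]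
    field_simp at hm
    linear_combination -hm

include hq hq0 hc hd hgcd in
lemma K_exists {α₀ : ℂ} (hα₀ : α₀ ≠ 0) (h : Dn q c d α₀ = 0) :
    ∃ K : ℂ → ℂ, DifferentiableAt ℂ K α₀ ∧ K α₀ ≠ 0 ∧
      ∀ α : ℂ, α ≠ 0 → Dn q c d α = (1 - α / α₀) * K α := by
  have hthc : DifferentiableAt ℂ (fun y : ℂ => theta (y / c) q) α₀ := by
    have e : (fun y : ℂ => theta (y / c) q) = (fun y : ℂ => theta y q) ∘ (fun y : ℂ => y / c) :=
      rfl
    rw [e]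
    exact DifferentiableAt.comp _
      ((diffOn_theta hq).differentiableAt (isOpen_ne_zero.mem_nhds (div_ne_zero hα₀ hc)))
      (differentiableAt_id.div_const c)
  have hthd : DifferentiableAt ℂ (fun y : ℂ => theta (q * y / d) q) α₀ := by
    have e : (fun y : ℂ => theta (q * y / d) q)
        = (fun y : ℂ => theta y q) ∘ (fun y : ℂ => q * y / d) := rfl
    rw [e]
    exact DifferentiableAt.comp _
      ((diffOn_theta hq).differentiableAt (isOpen_ne_zero.mem_nhds
        (div_ne_zero (mul_ne_zero hq0 hα₀) hd)))
      ((differentiableAt_id.const_mul q).div_const d)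
  rcases D_zero_cases hq hq0 hc hd hα₀ h with ⟨n, hn⟩ | ⟨n, hn⟩
  · obtain ⟨g, hgdiff, hg0, hg⟩ := theta_factor hq hq0 n
    have hgAt : DifferentiableAt ℂ (fun y : ℂ => g (y / c)) α₀ := by
      have e : (fun y : ℂ => g (y / c)) = g ∘ (fun y : ℂ => y / c) := rfl
      rw [e]
      exact DifferentiableAt.comp _
        (hgdiff.differentiableAt (isOpen_ne_zero.mem_nhds (div_ne_zero hα₀ hc)))
        (differentiableAt_id.div_const c)
    refine ⟨fun α => g (α / c) * theta (q * α / d) q, hgAt.mul hthd, ?_, ?_⟩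
    · apply mul_ne_zero
      · have e : α₀ / c = q ^ n := by
          rw [hn, mul_comm, mul_div_assoc, div_self hc, mul_one]
        rw [e]; exact hg0
      · apply theta_ne_zero hq hq0 (div_ne_zero (mul_ne_zero hq0 hα₀) hd)
        intro m hm
        apply hgcd (m - (n + 1))
        have key : d * q ^ (m - (n + 1)) = c := by
          have e1 : q ^ (m - ((n : ℤ) + 1)) = q ^ m * (q ^ n * q)⁻¹ := by
            rw [zpow_sub₀ hq0, div_eq_mul_inv, zpow_add_one₀ hq0]
          rw [e1, ← hm, hn]
          have hqn : (q : ℂ) ^ n ≠ 0 := zpow_ne_zero _ hq0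
          field_simp
        rw [← key]
    · intro α hα
      have harg : α / c / q ^ n = α / α₀ := by rw [hn, div_div]
      rw [Dn, hg (α / c) (div_ne_zero hα hc), harg, mul_assoc]
  · obtain ⟨g, hgdiff, hg0, hg⟩ := theta_factor hq hq0 (n + 1)
    have hgAt : DifferentiableAt ℂ (fun y : ℂ => g (q * y / d)) α₀ := by
      have e : (fun y : ℂ => g (q * y / d)) = g ∘ (fun y : ℂ => q * y / d) := rfl
      rw [e]
      exact DifferentiableAt.comp _
        (hgdiff.differentiableAt (isOpen_ne_zero.mem_nhds
          (div_ne_zero (mul_ne_zero hq0 hα₀) hd)))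
        ((differentiableAt_id.const_mul q).div_const d)
    have e : q * α₀ / d = q ^ ((n : ℤ) + 1) := by
      rw [hn, zpow_add_one₀ hq0, mul_comm d (q ^ n), mul_div_assoc, mul_div_assoc,
        div_self hd, mul_one]
      ring
    refine ⟨fun α => theta (α / c) q * g (q * α / d), hthc.mul hgAt, ?_, ?_⟩
    · apply mul_ne_zero
      · apply theta_ne_zero hq hq0 (div_ne_zero hα₀ hc)
        intro m hm
        apply hgcd (n - m)
        have key : d * q ^ (n - m) = c := by
          have e1 : q ^ ((n : ℤ) - m) = q ^ n * (q ^ m)⁻¹ := by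
            rw [zpow_sub₀ hq0, div_eq_mul_inv]
          rw [e1, ← hm, hn]
          have hqn : (q : ℂ) ^ n ≠ 0 := zpow_ne_zero _ hq0
          field_simp
        rw [← key]
      · rw [e]; exact hg0
    · intro α hα
      have harg : q * α / d / q ^ ((n : ℤ) + 1) = α / α₀ := by
        rw [hn, zpow_add_one₀ hq0, div_div,
          div_eq_div_iff (mul_ne_zero hd (mul_ne_zero (zpow_ne_zero _ hq0) hq0))
            (mul_ne_zero hd (zpow_ne_zero _ hq0))]
        ring
      rw [Dn, hg (q * α / d) (div_ne_zero (mul_ne_zero hq0 hα) hd), harg]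
      ring

end zeros
section quotient
open Filter Topology
variable {q b c d : ℂ} (hq : ‖q‖ < 1) (hq0 : q ≠ 0) (hb : b ≠ 0) (hc : c ≠ 0) (hd : d ≠ 0)

include hq in
lemma diffOn_theta_udiv {u : ℂ} (hu : u ≠ 0) :
    DifferentiableOn ℂ (fun α : ℂ => theta (u / α) q) {x : ℂ | x ≠ 0} := by
  have e : (fun α : ℂ => theta (u / α) q)
      = (fun y : ℂ => theta y q) ∘ (fun α : ℂ => u / α) := rfl
  rw [e]
  exact (diffOn_theta hq).comp
    ((differentiableOn_const u).div differentiableOn_id (fun x hx => hx))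
    (fun x hx => div_ne_zero hu hx)

include hq in
lemma diffOn_theta_divu {u : ℂ} (hu : u ≠ 0) :
    DifferentiableOn ℂ (fun α : ℂ => theta (α / u) q) {x : ℂ | x ≠ 0} := by
  have e : (fun α : ℂ => theta (α / u) q)
      = (fun y : ℂ => theta y q) ∘ (fun α : ℂ => α / u) := rfl
  rw [e]
  exact (diffOn_theta hq).comp (differentiableOn_id.div_const u)
    (fun x hx => div_ne_zero hx hu)

include hq hq0 hd in
lemma diffOn_theta_qdivd :
    DifferentiableOn ℂ (fun α : ℂ => theta (q * α / d) q) {x : ℂ | x ≠ 0} := by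
  have e : (fun α : ℂ => theta (q * α / d) q)
      = (fun y : ℂ => theta y q) ∘ (fun α : ℂ => q * α / d) := rfl
  rw [e]
  exact (diffOn_theta hq).comp
    ((differentiableOn_id.const_mul q).div_const d)
    (fun x hx => div_ne_zero (mul_ne_zero hq0 hx) hd)

include hq hb hc hd in
lemma diffOn_F : DifferentiableOn ℂ (Fn q b c d) {x : ℂ | x ≠ 0} := by
  have hcd : c * d ≠ 0 := mul_ne_zero hc hd
  have h1 : DifferentiableOn ℂ (fun α : ℂ => theta (c*d/α) q) {x : ℂ | x ≠ 0} :=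
    diffOn_theta_udiv hq hcd
  have h4 : DifferentiableOn ℂ (fun α : ℂ => theta (c*d/(b*α)) q) {x : ℂ | x ≠ 0} := by
    apply (diffOn_theta_udiv hq (div_ne_zero hcd hb)).congr
    intro x _
    rw [show c*d/(b*x) = (c*d/b)/x by ring]
  have h5 : DifferentiableOn ℂ (fun α : ℂ => theta (d/α) q) {x : ℂ | x ≠ 0} :=
    diffOn_theta_udiv hq hd
  show DifferentiableOn ℂ (fun α : ℂ =>
    theta (d/b) q * theta (c/b) q * theta (c*d/α) q * theta α q
    - theta c q * theta d q * theta (α/b) q * theta (c*d/(b*α)) q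
    - c * (theta (c*d/b) q * theta (1/b) q * theta (d/α) q * theta (α/c) q))
      {x : ℂ | x ≠ 0}
  apply DifferentiableOn.sub
  · apply DifferentiableOn.sub
    · exact (((differentiableOn_const _).mul (differentiableOn_const _)).mul h1).mul
        (diffOn_theta hq)
    · exact (((differentiableOn_const (theta c q)).mul (differentiableOn_const _)).mul
        (diffOn_theta_divu hq hb)).mul h4
  · exact ((((differentiableOn_const (theta (c*d/b) q)).mul
      (differentiableOn_const _)).mul h5).mul (diffOn_theta_divu hq hc)).const_mul c

include hq hq0 hc hd in
lemma diffOn_D : DifferentiableOn ℂ (Dn q c d) {x : ℂ | x ≠ 0} := by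
  show DifferentiableOn ℂ
    (fun α : ℂ => theta (α/c) q * theta (q*α/d) q) {x : ℂ | x ≠ 0}
  exact (diffOn_theta_divu hq hc).mul (diffOn_theta_qdivd hq hq0 hd)

/-- The quotient `F/D`, with removable singularities filled by L'Hôpital values. -/
noncomputable def Gq (q b c d : ℂ) (α : ℂ) : ℂ :=
  if Dn q c d α = 0 then deriv (Fn q b c d) α / deriv (Dn q c d) α
  else Fn q b c d α / Dn q c d α

variable (hgcd : ∀ n : ℤ, c ≠ d * q ^ n)

include hq hq0 hb hc hd hgcd in
lemma G_diffAt {α₀ : ℂ} (hα₀ : α₀ ≠ 0) : DifferentiableAt ℂ (Gq q b c d) α₀ := by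
  have hFd : DifferentiableAt ℂ (Fn q b c d) α₀ :=
    (diffOn_F hq hb hc hd).differentiableAt (isOpen_ne_zero.mem_nhds hα₀)
  have hDd : DifferentiableAt ℂ (Dn q c d) α₀ :=
    (diffOn_D hq hq0 hc hd).differentiableAt (isOpen_ne_zero.mem_nhds hα₀)
  by_cases hD : Dn q c d α₀ = 0
  · obtain ⟨K, hKd, hK0, hKfact⟩ := K_exists hq hq0 hc hd hgcd hα₀ hD
    have hF0 : Fn q b c d α₀ = 0 := F_on_D_zeros hq hq0 hb hc hd hα₀ hD
    set F₁ := dslope (Fn q b c d) α₀ with hF₁def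
    have hF₁diff : DifferentiableAt ℂ F₁ α₀ := by
      have := (Complex.differentiableOn_dslope
        (isOpen_ne_zero.mem_nhds hα₀)).2 (diffOn_F hq hb hc hd)
      exact this.differentiableAt (isOpen_ne_zero.mem_nhds hα₀)
    have hFfact : ∀ z : ℂ, Fn q b c d z = (z - α₀) * F₁ z := by
      intro z
      have := sub_smul_dslope (Fn q b c d) α₀ z
      rw [smul_eq_mul] at this
      rw [hF₁def, this, hF0, sub_zero]
    have hDev : Dn q c d =ᶠ[𝓝 α₀] fun z => (1 - z / α₀) * K z := by
      filter_upwards [isOpen_ne_zero.mem_nhds hα₀] with z hz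
      exact hKfact z hz
    have hderivD : deriv (Dn q c d) α₀ = -(1 / α₀) * K α₀ := by
      rw [hDev.deriv_eq]
      have h1 : HasDerivAt (fun z : ℂ => 1 - z / α₀) (-(1 / α₀)) α₀ := by
        simpa using ((hasDerivAt_id α₀).div_const α₀).const_sub 1
      have h2 : HasDerivAt K (deriv K α₀) α₀ := hKd.hasDerivAt
      have := (h1.mul h2).deriv
      rw [show (fun z => (1 - z / α₀) * K z) = (fun z : ℂ => 1 - z / α₀) * K from rfl,
        this, div_self hα₀, sub_self, zero_mul, add_zero]
    set L := fun z : ℂ => -α₀ * F₁ z / K z with hLdef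
    have hLdiff : DifferentiableAt ℂ L α₀ :=
      ((differentiableAt_const (-α₀)).mul hF₁diff).div hKd hK0
    have hGL : Gq q b c d =ᶠ[𝓝 α₀] L := by
      have hKev : ∀ᶠ z in 𝓝 α₀, K z ≠ 0 := hKd.continuousAt.eventually_ne hK0
      filter_upwards [hKev, isOpen_ne_zero.mem_nhds hα₀] with z hKz hz
      by_cases hzα : z = α₀
      · subst hzα
        rw [Gq, if_pos hD, hderivD]
        have hdF : deriv (Fn q b c d) z = F₁ z := (dslope_same _ _).symm
        have hm : -(1 / z) ≠ 0 := neg_ne_zero.2 (one_div_ne_zero hz)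
        rw [hdF, hLdef]
        rw [div_eq_div_iff (mul_ne_zero hm hKz) hKz]
        field_simp
      · have hone : (1 : ℂ) - z / α₀ ≠ 0 := by
          rw [sub_ne_zero]
          intro h1
          apply hzα
          field_simp at h1
          exact h1.symm
        have hDz : Dn q c d z ≠ 0 := by
          rw [hKfact z hz]
          exact mul_ne_zero hone hKz
        rw [Gq, if_neg hDz, hKfact z hz, hFfact z, hLdef]
        rw [div_eq_div_iff (mul_ne_zero hone hKz) hKz]
        field_simp
        ring
    exact hLdiff.congr_of_eventuallyEq hGL
  · have hev : ∀ᶠ z in 𝓝 α₀, Dn q c d z ≠ 0 := hDd.continuousAt.eventually_ne hD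
    have hGq : Gq q b c d =ᶠ[𝓝 α₀] fun z => Fn q b c d z / Dn q c d z := by
      filter_upwards [hev] with z hz
      rw [Gq, if_neg hz]
    exact ((hFd.div hDd hD).congr_of_eventuallyEq hGq)

end quotient
section liouville
open Filter Topology Metric Set
variable {q b c d : ℂ} (hq : ‖q‖ < 1) (hq0 : q ≠ 0) (hb : b ≠ 0) (hc : c ≠ 0) (hd : d ≠ 0)
  (hgcd : ∀ n : ℤ, c ≠ d * q ^ n)

include hq hq0 hb hc hd hgcd in
lemma G_q_invariant {α : ℂ} (hα : α ≠ 0) : Gq q b c d (q * α) = Gq q b c d α := by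
  have hqα : q * α ≠ 0 := mul_ne_zero hq0 hα
  have hqa2 : q * α ^ 2 ≠ 0 := mul_ne_zero hq0 (pow_ne_zero 2 hα)
  have hFq := F_qmul hq hq0 hb hc hd hα
  have hDq := D_qmul hq hq0 hc hd hα
  by_cases hD : Dn q c d α = 0
  · -- both sides are limits of the generic identity on a punctured neighbourhood
    obtain ⟨K, hKd, hK0, hKfact⟩ := K_exists hq hq0 hc hd hgcd hα hD
    have hev : ∀ᶠ z in 𝓝[≠] α, Gq q b c d (q * z) = Gq q b c d z := by
      have hKev : ∀ᶠ z in 𝓝 α, K z ≠ 0 := hKd.continuousAt.eventually_ne hK0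
      have hne : ∀ᶠ z in 𝓝 α, z ≠ 0 := isOpen_ne_zero.mem_nhds hα
      filter_upwards [nhdsWithin_le_nhds hKev, nhdsWithin_le_nhds hne,
        self_mem_nhdsWithin] with z hKz hz0 (hzα : z ≠ α)
      have hone : (1 : ℂ) - z / α ≠ 0 := by
        rw [sub_ne_zero]
        intro h1
        apply hzα
        field_simp at h1
        exact h1.symm
      have hDz : Dn q c d z ≠ 0 := by rw [hKfact z hz0]; exact mul_ne_zero hone hKz
      have hDqz : Dn q c d (q * z) ≠ 0 := by
        intro h0
        have := D_qmul hq hq0 hc hd hz0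
        rw [h0, mul_zero] at this
        rcases mul_eq_zero.1 this.symm with h1 | h1
        · exact mul_ne_zero hc hd h1
        · exact hDz h1
      rw [Gq, Gq, if_neg hDqz, if_neg hDz,
        div_eq_div_iff hDqz hDz]
      apply mul_left_cancel₀ (mul_ne_zero hb (mul_ne_zero hq0 (pow_ne_zero 2 hz0)))
      linear_combination (Dn q c d z) * (F_qmul hq hq0 hb hc hd hz0)
        - (b * Fn q b c d z) * (D_qmul hq hq0 hc hd hz0)
    have h1 : ContinuousAt (fun z => Gq q b c d (q * z)) α := by
      have := (G_diffAt hq hq0 hb hc hd hgcd hqα).continuousAt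
      exact this.comp ((continuous_mul_left q).continuousAt)
    have h2 : ContinuousAt (Gq q b c d) α :=
      (G_diffAt hq hq0 hb hc hd hgcd hα).continuousAt
    have hev' : (fun z => Gq q b c d (q * z)) =ᶠ[𝓝[≠] α] Gq q b c d := hev
    exact tendsto_nhds_unique
      ((h1.continuousWithinAt.tendsto).congr' hev')
      (h2.continuousWithinAt.tendsto)
  · have hDqz : Dn q c d (q * α) ≠ 0 := by
      intro h0
      rw [h0, mul_zero] at hDq
      rcases mul_eq_zero.1 hDq.symm with h1 | h1
      · exact mul_ne_zero hc hd h1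
      · exact hD h1
    rw [Gq, Gq, if_neg hDqz, if_neg hD, div_eq_div_iff hDqz hD]
    apply mul_left_cancel₀ (mul_ne_zero hb hqa2)
    linear_combination (Dn q c d α) * hFq - (b * Fn q b c d α) * hDq

include hq hq0 hb hc hd hgcd in
lemma G_lattice (n : ℤ) {α : ℂ} (hα : α ≠ 0) :
    Gq q b c d (q ^ n * α) = Gq q b c d α := by
  induction n using Int.induction_on with
  | zero => simp
  | succ n ih =>
    have hqx : q ^ (n : ℤ) * α ≠ 0 := mul_ne_zero (zpow_ne_zero _ hq0) hα
    have e : q ^ ((n : ℤ) + 1) * α = q * (q ^ (n : ℤ) * α) := by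
      rw [zpow_add₀ hq0, zpow_one]; ring
    rw [e, G_q_invariant hq hq0 hb hc hd hgcd hqx]
    exact ih
  | pred n ih =>
    have hqx : q ^ (-(n : ℤ) - 1) * α ≠ 0 := mul_ne_zero (zpow_ne_zero _ hq0) hα
    have e : q ^ (-(n : ℤ)) * α = q * (q ^ (-(n : ℤ) - 1) * α) := by
      rw [zpow_sub₀ hq0, zpow_one]; field_simp
    rw [e] at ih
    rw [← G_q_invariant hq hq0 hb hc hd hgcd hqx]
    exact ih

include hq0 in
lemma annulus_reach (hql : ‖q‖ < 1) {α : ℂ} (hα : α ≠ 0) :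
    ∃ n : ℤ, ‖q‖ ≤ ‖q ^ n * α‖ ∧ ‖q ^ n * α‖ ≤ 1 := by
  have hq0' : 0 < ‖q‖ := norm_pos_iff.2 hq0
  have ht : 0 < ‖α‖ := norm_pos_iff.2 hα
  set L : ℝ := Real.log ‖q‖ with hL
  have hLneg : L < 0 := Real.log_neg hq0' hql
  set s : ℝ := Real.log ‖α‖ / L with hs
  have hnorm : ‖q ^ (⌈-s⌉ : ℤ) * α‖ = Real.exp ((⌈-s⌉ : ℤ) * L + Real.log ‖α‖) := by
    rw [norm_mul, norm_zpow, Real.exp_add, Real.exp_log ht]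
    congr 1
    rw [← Real.rpow_intCast ‖q‖ ⌈-s⌉, Real.rpow_def_of_pos hq0', mul_comm]
  have h1 : (⌈-s⌉ : ℝ) ≥ -s := Int.le_ceil (-s)
  have h2 : (⌈-s⌉ : ℝ) < -s + 1 := Int.ceil_lt_add_one (-s)
  have hsL : s * L = Real.log ‖α‖ := div_mul_cancel₀ _ hLneg.ne
  have key1 : L ≤ (⌈-s⌉ : ℝ) * L + Real.log ‖α‖ := by
    nlinarith [mul_pos_of_neg_of_neg (show (⌈-s⌉ : ℝ) + s - 1 < 0 by linarith) hLneg]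
  have key2 : (⌈-s⌉ : ℝ) * L + Real.log ‖α‖ ≤ 0 := by
    nlinarith [mul_nonpos_of_nonneg_of_nonpos
      (show (0:ℝ) ≤ (⌈-s⌉ : ℝ) + s by linarith) hLneg.le]
  refine ⟨⌈-s⌉, ?_, ?_⟩
  · rw [hnorm]
    calc ‖q‖ = Real.exp L := (Real.exp_log hq0').symm
      _ ≤ _ := by apply Real.exp_le_exp.2; push_cast; exact key1
  · rw [hnorm]
    rw [Real.exp_le_one_iff]
    push_cast
    exact key2

end liouville
section endgame
open Filter Topology Metric Set
variable {q b c d : ℂ} (hq : ‖q‖ < 1) (hq0 : q ≠ 0) (hb : b ≠ 0) (hc : c ≠ 0) (hd : d ≠ 0)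
  (hgc : ∀ n : ℤ, c ≠ q ^ n) (hgd : ∀ n : ℤ, d ≠ q ^ n) (hgcd : ∀ n : ℤ, c ≠ d * q ^ n)

include hq hq0 hb hc hd hgcd in
lemma G_bounded : ∃ M : ℝ, ∀ α : ℂ, α ≠ 0 → ‖Gq q b c d α‖ ≤ M := by
  set A : Set ℂ := Metric.closedBall 0 1 ∩ {z : ℂ | ‖q‖ ≤ ‖z‖} with hA
  have hAcomp : IsCompact A := (isCompact_closedBall 0 1).inter_right
    (isClosed_le continuous_const continuous_norm)
  have hAsub : ∀ z ∈ A, z ≠ 0 := by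
    intro z hz
    have h1 : ‖q‖ ≤ ‖z‖ := hz.2
    have h2 : 0 < ‖q‖ := norm_pos_iff.2 hq0
    exact norm_pos_iff.1 (lt_of_lt_of_le h2 h1)
  have hcont : ContinuousOn (Gq q b c d) A := fun z hz =>
    (G_diffAt hq hq0 hb hc hd hgcd (hAsub z hz)).continuousAt.continuousWithinAt
  obtain ⟨M, hM⟩ := hAcomp.exists_bound_of_continuousOn hcont
  refine ⟨M, fun α hα => ?_⟩
  obtain ⟨n, hn1, hn2⟩ := annulus_reach hq0 hq hα
  have hmem : q ^ n * α ∈ A := by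
    constructor
    · rw [Metric.mem_closedBall, dist_zero_right]; exact hn2
    · exact hn1
  rw [← G_lattice hq hq0 hb hc hd hgcd n hα]
  exact hM _ hmem

include hq hq0 hb hc hd hgc hgd hgcd in
lemma G_eq_zero : ∀ α : ℂ, α ≠ 0 → Gq q b c d α = 0 := by
  obtain ⟨M, hM⟩ := G_bounded hq hq0 hb hc hd hgcd
  have hGdiff : DifferentiableOn ℂ (Gq q b c d) (Set.univ \ {0}) := by
    intro z hz
    exact ((G_diffAt hq hq0 hb hc hd hgcd (by simpa using hz.2)).differentiableWithinAt)
  have hbdd : BddAbove (norm ∘ (Gq q b c d) '' (Set.univ \ {0})) := by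
    refine ⟨M, ?_⟩
    rintro y ⟨z, hz, rfl⟩
    exact hM z (by simpa using hz.2)
  set Gext := Function.update (Gq q b c d) 0 (limUnder (𝓝[≠] (0:ℂ)) (Gq q b c d)) with hGextdef
  have hGext : DifferentiableOn ℂ Gext Set.univ :=
    Complex.differentiableOn_update_limUnder_of_bddAbove Filter.univ_mem hGdiff hbdd
  have hGd : Differentiable ℂ Gext := differentiableOn_univ.1 hGext
  have hbound : ∀ z : ℂ, ‖Gext z‖ ≤ M := by
    intro z
    by_cases hz : z = 0
    · subst hz
      have htd : Tendsto Gext (𝓝[≠] (0:ℂ)) (𝓝 (Gext 0)) :=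
        (hGd.continuous.continuousAt).continuousWithinAt.tendsto
      apply le_of_tendsto htd.norm
      filter_upwards [self_mem_nhdsWithin] with w hw
      rw [hGextdef, Function.update_of_ne hw]
      exact hM w hw
    · rw [hGextdef, Function.update_of_ne hz]
      exact hM z hz
  have hrange : Bornology.IsBounded (Set.range Gext) := by
    apply isBounded_iff_forall_norm_le.2 ⟨M, ?_⟩
    rintro y ⟨z, rfl⟩
    exact hbound z
  have hG1 : Gq q b c d 1 = 0 := by
    rw [Gq, if_neg (D_at_one_ne hq hq0 hc hd hgc hgd), F_at_one hq hq0 hc, zero_div]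
  intro α hα
  have h1 : Gq q b c d α = Gext α := (Function.update_of_ne hα _ _).symm
  have h2 : Gext α = Gext 1 := hGd.apply_eq_apply_of_bounded hrange α 1
  rw [h1, h2, hGextdef, Function.update_of_ne one_ne_zero, hG1]

include hq hq0 hb hc hd hgc hgd hgcd in
lemma Fn_eq_zero_generic {α : ℂ} (hα : α ≠ 0) : Fn q b c d α = 0 := by
  by_cases hD : Dn q c d α = 0
  · exact F_on_D_zeros hq hq0 hb hc hd hα hD
  · have hG := G_eq_zero hq hq0 hb hc hd hgc hgd hgcd α hα
    rw [Gq, if_neg hD, div_eq_zero_iff] at hG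
    rcases hG with h1 | h1
    · exact h1
    · exact absurd h1 hD

end endgame
section density
open Filter Topology Set
variable {q b c d : ℂ} (hq : ‖q‖ < 1) (hq0 : q ≠ 0)

lemma eq_zero_of_eq_zero_off_countable {f : ℂ → ℂ} {S : Set ℂ} (hS : S.Countable)
    (hf : ContinuousOn f {x : ℂ | x ≠ 0})
    (h : ∀ x : ℂ, x ≠ 0 → x ∉ S → f x = 0) : ∀ x : ℂ, x ≠ 0 → f x = 0 := by
  intro x hx
  have hdense : Dense Sᶜ := hS.dense_compl ℂ
  have hopen : IsOpen {y : ℂ | y ≠ 0} := isOpen_ne_zero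
  have hx' : x ∈ closure ({y : ℂ | y ≠ 0} ∩ Sᶜ) :=
    hdense.open_subset_closure_inter hopen hx
  have hne : NeBot (𝓝[{y : ℂ | y ≠ 0} ∩ Sᶜ] x) :=
    mem_closure_iff_nhdsWithin_neBot.1 hx'
  have ht1 : Tendsto f (𝓝[{y : ℂ | y ≠ 0} ∩ Sᶜ] x) (𝓝 (f x)) :=
    ((hf x hx).mono (inter_subset_left)).tendsto
  have ht2 : Tendsto f (𝓝[{y : ℂ | y ≠ 0} ∩ Sᶜ] x) (𝓝 0) := by
    apply Tendsto.congr' _ tendsto_const_nhds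
    filter_upwards [self_mem_nhdsWithin] with w hw
    exact (h w hw.1 hw.2).symm
  exact tendsto_nhds_unique ht1 ht2

include hq in
lemma contOn_theta_comp {f : ℂ → ℂ} (hf : ContinuousOn f {x : ℂ | x ≠ 0})
    (h0 : ∀ x : ℂ, x ≠ 0 → f x ≠ 0) :
    ContinuousOn (fun x : ℂ => theta (f x) q) {x : ℂ | x ≠ 0} :=
  ContinuousOn.comp (diffOn_theta hq).continuousOn hf (fun x hx => h0 x hx)

include hq hq0 in
lemma contOn_F_c {α : ℂ} (hb : b ≠ 0) (hd : d ≠ 0) (hα : α ≠ 0) :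
    ContinuousOn (fun x : ℂ => Fn q b x d α) {x : ℂ | x ≠ 0} := by
  have hid : ContinuousOn (fun x : ℂ => x) {x : ℂ | x ≠ 0} := continuousOn_id
  have t1 := contOn_theta_comp hq (f := fun x : ℂ => x / b)
    (hid.div_const b) (fun x hx => div_ne_zero hx hb)
  have t2 := contOn_theta_comp hq (f := fun x : ℂ => x * d / α)
    ((hid.mul continuousOn_const).div_const α)
    (fun x hx => div_ne_zero (mul_ne_zero hx hd) hα)
  have t3 := contOn_theta_comp hq (f := fun x : ℂ => x) hid (fun x hx => hx)
  have t4 := contOn_theta_comp hq (f := fun x : ℂ => x * d / (b * α))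
    ((hid.mul continuousOn_const).div_const (b * α))
    (fun x hx => div_ne_zero (mul_ne_zero hx hd) (mul_ne_zero hb hα))
  have t5 := contOn_theta_comp hq (f := fun x : ℂ => x * d / b)
    ((hid.mul continuousOn_const).div_const b)
    (fun x hx => div_ne_zero (mul_ne_zero hx hd) hb)
  have t6 := contOn_theta_comp hq (f := fun x : ℂ => α / x)
    (continuousOn_const.div hid (fun x hx => hx)) (fun x hx => div_ne_zero hα hx)
  show ContinuousOn (fun x : ℂ =>
    theta (d/b) q * theta (x/b) q * theta (x*d/α) q * theta α q
    - theta x q * theta d q * theta (α/b) q * theta (x*d/(b*α)) q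
    - x * (theta (x*d/b) q * theta (1/b) q * theta (d/α) q * theta (α/x) q))
    {x : ℂ | x ≠ 0}
  apply ContinuousOn.sub
  · apply ContinuousOn.sub
    · exact ((continuousOn_const.mul t1).mul t2).mul continuousOn_const
    · exact ((t3.mul continuousOn_const).mul continuousOn_const).mul t4
  · exact hid.mul (((t5.mul continuousOn_const).mul continuousOn_const).mul t6)

include hq hq0 in
lemma contOn_F_d {α : ℂ} (hb : b ≠ 0) (hc : c ≠ 0) (hα : α ≠ 0) :
    ContinuousOn (fun x : ℂ => Fn q b c x α) {x : ℂ | x ≠ 0} := by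
  have hid : ContinuousOn (fun x : ℂ => x) {x : ℂ | x ≠ 0} := continuousOn_id
  have t1 := contOn_theta_comp hq (f := fun x : ℂ => x / b)
    (hid.div_const b) (fun x hx => div_ne_zero hx hb)
  have t2 := contOn_theta_comp hq (f := fun x : ℂ => c * x / α)
    ((continuousOn_const.mul hid).div_const α)
    (fun x hx => div_ne_zero (mul_ne_zero hc hx) hα)
  have t3 := contOn_theta_comp hq (f := fun x : ℂ => x) hid (fun x hx => hx)
  have t4 := contOn_theta_comp hq (f := fun x : ℂ => c * x / (b * α))
    ((continuousOn_const.mul hid).div_const (b * α))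
    (fun x hx => div_ne_zero (mul_ne_zero hc hx) (mul_ne_zero hb hα))
  have t5 := contOn_theta_comp hq (f := fun x : ℂ => c * x / b)
    ((continuousOn_const.mul hid).div_const b)
    (fun x hx => div_ne_zero (mul_ne_zero hc hx) hb)
  have t6 := contOn_theta_comp hq (f := fun x : ℂ => x / α)
    (hid.div_const α) (fun x hx => div_ne_zero hx hα)
  show ContinuousOn (fun x : ℂ =>
    theta (x/b) q * theta (c/b) q * theta (c*x/α) q * theta α q
    - theta c q * theta x q * theta (α/b) q * theta (c*x/(b*α)) q
    - c * (theta (c*x/b) q * theta (1/b) q * theta (x/α) q * theta (α/c) q))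
    {x : ℂ | x ≠ 0}
  apply ContinuousOn.sub
  · apply ContinuousOn.sub
    · exact ((t1.mul continuousOn_const).mul t2).mul continuousOn_const
    · exact ((continuousOn_const.mul t3).mul continuousOn_const).mul t4
  · exact continuousOn_const.mul
      (((t5.mul continuousOn_const).mul t6).mul continuousOn_const)

include hq hq0 in
lemma Fn_eq_zero {α : ℂ} (hb : b ≠ 0) (hc : c ≠ 0) (hd : d ≠ 0) (hα : α ≠ 0) :
    Fn q b c d α = 0 := by
  have hcount : (Set.range fun n : ℤ => (q : ℂ) ^ n).Countable := Set.countable_range _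
  -- Step A: for d not in the lattice, all c work.
  have stepA : ∀ d' : ℂ, d' ≠ 0 → (∀ n : ℤ, d' ≠ q ^ n) →
      ∀ c' : ℂ, c' ≠ 0 → Fn q b c' d' α = 0 := by
    intro d' hd' hgd'
    have hS : ((Set.range fun n : ℤ => (q : ℂ) ^ n)
        ∪ (Set.range fun n : ℤ => d' * q ^ n)).Countable :=
      hcount.union (Set.countable_range _)
    apply eq_zero_of_eq_zero_off_countable hS (contOn_F_c hq hq0 hb hd' hα)
    intro x hx hxS
    rw [Set.mem_union, not_or] at hxS
    apply Fn_eq_zero_generic hq hq0 hb hx hd'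
    · intro n hn; exact hxS.1 ⟨n, hn.symm⟩
    · exact hgd'
    · intro n hn; exact hxS.2 ⟨n, hn.symm⟩
    · exact hα
  -- Step B: extend in d.
  have stepB : ∀ d' : ℂ, d' ≠ 0 → Fn q b c d' α = 0 := by
    apply eq_zero_of_eq_zero_off_countable hcount (contOn_F_d hq hq0 hb hc hα)
    intro x hx hxS
    apply stepA x hx _ c hc
    intro n hn
    exact hxS ⟨n, hn.symm⟩
  exact stepB d hd

end density
section qzero

lemma qPoch_zero (x : ℂ) : qPoch x 0 = 1 - x := by
  rw [qPoch]
  rw [tprod_eq_prod (s := {0}) (f := fun k : ℕ => 1 - x * (0:ℂ) ^ k)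
    (fun k hk => by
      rw [zero_pow (by simpa using hk), mul_zero, sub_zero])]
  simp

lemma theta_zero (x : ℂ) : theta x 0 = 1 - x := by
  rw [theta, qPoch_zero, zero_div, qPoch_zero]
  ring

end qzero

theorem chu_identity' (q : ℂ) (hq : ‖q‖ < 1)
    (b c d α : ℂ) (hb : b ≠ 0) (hc : c ≠ 0) (hd : d ≠ 0) (hα : α ≠ 0) :
    theta (d / b) q * theta (c / b) q * theta (c * d / α) q * theta α q
      - theta c q * theta d q * theta (α / b) q * theta (c * d / (b * α)) q
      = c * (theta (c * d / b) q * theta (1 / b) q * theta (d / α) q * theta (α / c) q) := by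
  by_cases hq0 : q = 0
  · subst hq0
    simp only [theta_zero]
    field_simp
    ring
  · have h := Fn_eq_zero hq hq0 (b := b) (c := c) (d := d) (α := α) hb hc hd hα
    rw [Fn] at h
    linear_combination h


/-- Chu's identity:
`[d/b, c/b, cd/α, α; q]_∞ − [c, d, α/b, cd/(bα); q]_∞ = c [cd/b, 1/b, d/α, α/c; q]_∞`. -/
theorem chu_identity (q : ℂ) (hq : ‖q‖ < 1)
    (b c d α : ℂ) (hb : b ≠ 0) (hc : c ≠ 0) (hd : d ≠ 0) (hα : α ≠ 0) :
    theta (d / b) q * theta (c / b) q * theta (c * d / α) q * theta α q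
      - theta c q * theta d q * theta (α / b) q * theta (c * d / (b * α)) q
      = c * (theta (c * d / b) q * theta (1 / b) q * theta (d / α) q * theta (α / c) q) := by
  exact chu_identity' q hq b c d α hb hc hd hα
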